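/- For the homology ring of the n-torus (n ≥ 2) over a field F, generated as an algebra by classes x₁,...,x_n of degree n−1, any square-zero degree-1 derivation d₁ making the complex (H_*(T^n), d₁) acyclic satisfies d₁(x_i) = r_i·[L] with at least one r_i ≠ 0, and the torsion of this acyclic complex equals 1 in F^×/±1. -/

import Mathlib

open Finset

private abbrev Jty (n : ℕ) (j : Fin n) (i : ℕ) : Type :=
  {S : Finset (Fin n) // j ∉ S ∧ S.card + i = n}

private def esplit (n : ℕ) (j : Fin n) (i : ℕ) :
    {S : Finset (Fin n) // S.card + (i + 1) = n + 1} ≃ (Jty n j i ⊕ Jty n j (i + 1)) where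
  toFun S := if h : j ∈ S.1 then Sum.inr ⟨S.1.erase j, by
      refine ⟨Finset.notMem_erase _ _, ?_⟩
      have h1 := S.2
      have h2 := Finset.card_erase_of_mem h
      have h3 : 0 < S.1.card := Finset.card_pos.2 ⟨j, h⟩
      omega⟩
    else Sum.inl ⟨S.1, h, by have := S.2; omega⟩
  invFun := Sum.elim (fun S => ⟨S.1, by have := S.2.2; omega⟩)
    (fun S => ⟨insert j S.1, by rw [Finset.card_insert_of_notMem S.2.1]; have := S.2.2; omega⟩)
  left_inv S := by
    rcases S with ⟨S, hS⟩
    by_cases h : j ∈ S <;> simp [h, Finset.insert_erase]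
  right_inv S := by
    rcases S with ⟨S, hS⟩ | ⟨S, hS⟩
    · simp [hS.1]
    · simp [hS.1, Finset.erase_insert hS.1, Finset.mem_insert]

private lemma Jty_isEmpty_zero (n : ℕ) (hn : 1 ≤ n) (j : Fin n) : IsEmpty (Jty n j 0) := by
  constructor
  rintro ⟨S, hj, hc⟩
  have h1 : S ⊆ Finset.univ.erase j := fun y hy =>
    Finset.mem_erase.2 ⟨fun h => hj (h ▸ hy), Finset.mem_univ y⟩
  have h2 := Finset.card_le_card h1
  rw [Finset.card_erase_of_mem (Finset.mem_univ j)] at h2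
  simp [Finset.card_univ] at h2
  omega

private lemma Jty_isEmpty_top (n : ℕ) (j : Fin n) : IsEmpty (Jty n j (n + 1)) := by
  constructor
  rintro ⟨S, hj, hc⟩
  omega

private lemma Jty_card (n : ℕ) (j : Fin n) (i : ℕ) (hi : i ≤ n) :
    Fintype.card (Jty n j i) = (n - 1).choose (n - i) := by
  rw [Fintype.card_subtype]
  have : (Finset.univ.filter fun S : Finset (Fin n) => j ∉ S ∧ S.card + i = n) =
      (Finset.univ.erase j).powersetCard (n - i) := by
    ext S
    simp only [Finset.mem_filter, Finset.mem_univ, true_and, Finset.mem_powersetCard]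
    constructor
    · rintro ⟨hj, hc⟩
      exact ⟨fun y hy => Finset.mem_erase.2 ⟨fun h => hj (h ▸ hy), Finset.mem_univ y⟩, by omega⟩
    · rintro ⟨hs, hc⟩
      refine ⟨fun h => ?_, by omega⟩
      exact (Finset.mem_erase.1 (hs h)).1 rfl
  rw [this, Finset.card_powersetCard, Finset.card_erase_of_mem (Finset.mem_univ j),
    Finset.card_univ, Fintype.card_fin]

private lemma aux_alt_sum (n : ℕ) (hn : 2 ≤ n) :
    ∑ i ∈ Finset.range (n + 1), (-1 : ℤ) ^ i * ((n - 1).choose (n - i) : ℤ) = 0 := by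
  have h1 := Finset.sum_range_reflect (fun i => (-1 : ℤ) ^ i * ((n - 1).choose (n - i) : ℤ)) (n + 1)
  rw [← h1]
  have h2 : ∀ i ∈ Finset.range (n + 1),
      (-1 : ℤ) ^ (n + 1 - 1 - i) * ((n - 1).choose (n - (n + 1 - 1 - i)) : ℤ)
        = (-1 : ℤ) ^ n * ((-1 : ℤ) ^ i * ((n - 1).choose i : ℤ)) := by
    intro i hi
    rw [Finset.mem_range] at hi
    have h3 : n + 1 - 1 - i = n - i := by omega
    have h4 : n - (n - i) = i := by omega
    rw [h3, h4]
    have h5 : (-1 : ℤ) ^ (n - i) * (-1 : ℤ) ^ i = (-1 : ℤ) ^ n := by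
      rw [← pow_add]; congr 1; omega
    have h6 : (-1 : ℤ) ^ (n - i) = (-1 : ℤ) ^ n * (-1 : ℤ) ^ i := by
      have := h5
      have hinv : ((-1 : ℤ) ^ i) * ((-1 : ℤ) ^ i) = 1 := by
        rw [← pow_add]; simp [← two_mul, pow_mul]
      calc (-1 : ℤ) ^ (n - i) = (-1 : ℤ) ^ (n - i) * (((-1 : ℤ) ^ i) * ((-1 : ℤ) ^ i)) := by
            rw [hinv, mul_one]
        _ = (-1 : ℤ) ^ n * (-1 : ℤ) ^ i := by rw [← mul_assoc, h5]
    rw [h6]; ring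
  rw [Finset.sum_congr rfl h2, ← Finset.mul_sum]
  have h7 : Finset.range (n + 1) = Finset.range ((n - 1) + 1 + 1) := by congr 1; omega
  have h8 : ∑ i ∈ Finset.range (n + 1), (-1 : ℤ) ^ i * ((n - 1).choose i : ℤ) = 0 := by
    rw [h7, Finset.sum_range_succ]
    have h9 : (n - 1).choose (n - 1 + 1) = 0 := Nat.choose_succ_self _
    rw [h9]
    simpa using Int.alternating_sum_range_choose_of_ne (n := n - 1) (by omega)
  rw [h8, mul_zero]

private lemma aux_zpow_prod {F : Type*} [Field F] (a : F) (ha : a ≠ 0) (c : ℕ → ℤ) (N : ℕ) :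
    ∏ i ∈ Finset.range N, (a ^ (c i)) ^ ((-1 : ℤ) ^ i) =
      a ^ (∑ i ∈ Finset.range N, (-1 : ℤ) ^ i * c i) := by
  induction N with
  | zero => simp
  | succ N ih =>
    rw [Finset.prod_range_succ, Finset.sum_range_succ, ih, ← zpow_mul, ← zpow_add₀ ha]
    congr 1
    ring

private lemma aux_telescope {F : Type*} [Field F] (p : ℕ → F) (hp : ∀ i, p i ≠ 0) (N : ℕ) :
    ∏ i ∈ Finset.range (N + 1), (p i * p (i + 1)) ^ ((-1 : ℤ) ^ i) =
      p 0 * (p (N + 1)) ^ ((-1 : ℤ) ^ N) := by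
  induction N with
  | zero => simp [mul_zpow]
  | succ N ih =>
    rw [Finset.prod_range_succ, ih, mul_zpow]
    have h1 : ((-1 : ℤ) ^ (N + 1)) = -((-1 : ℤ) ^ N) := by ring
    rw [h1]
    rw [zpow_neg]
    have hne : p (N + 1) ^ ((-1 : ℤ) ^ N) ≠ 0 := zpow_ne_zero _ (hp _)
    rw [show p 0 * p (N + 1) ^ ((-1 : ℤ) ^ N) * ((p (N + 1) ^ ((-1 : ℤ) ^ N))⁻¹ *
        p (N + 1 + 1) ^ (-((-1 : ℤ) ^ N))) = p 0 * (p (N + 1) ^ ((-1 : ℤ) ^ N) *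
        (p (N + 1) ^ ((-1 : ℤ) ^ N))⁻¹) * p (N + 1 + 1) ^ (-((-1 : ℤ) ^ N)) from by ring,
      mul_inv_cancel₀ hne, mul_one]

private lemma aux_toMatrix_comb {F V ι : Type*} [Field F] [AddCommGroup V] [Module F V]
    [Fintype ι] [DecidableEq ι] (b : Module.Basis ι F V) (fam fam' : ι → V) (C : Matrix ι ι F)
    (h : ∀ p, fam p = ∑ k, C k p • fam' k) :
    b.toMatrix fam = b.toMatrix fam' * C := by
  ext q p
  rw [Matrix.mul_apply, Module.Basis.toMatrix_apply, h p, map_sum, Finsupp.finset_sum_apply]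
  refine Finset.sum_congr rfl fun k _ => ?_
  rw [map_smul, Finsupp.smul_apply, Module.Basis.toMatrix_apply, smul_eq_mul, mul_comm]

set_option maxHeartbeats 2000000 in
theorem stmt_18 (F A : Type*) [Field F] [Ring A] [Algebra F A]
    (n : ℕ) (hn : 2 ≤ n)
    (x : Fin n → A)
    (m : Finset (Fin n) → A)
    (hm : ∀ S : Finset (Fin n), m S = ((S.sort (· ≤ ·)).map x).prod)
    (H : ℕ → Submodule F A)
    (hH0 : H 0 = ⊥) (hHtop : ∀ j, n + 1 < j → H j = ⊥)
    (hmdeg : ∀ S : Finset (Fin n), m S ∈ H (n + 1 - S.card))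
    (hb : ∀ i : ℕ, Module.Basis {S : Finset (Fin n) // S.card + i = n + 1} F ↥(H i))
    (hhb : ∀ (i : ℕ) (S : {S : Finset (Fin n) // S.card + i = n + 1}), ((hb i S : A)) = m S.1)
    (d : A →ₗ[F] A) (hd2 : d ∘ₗ d = 0)
    (hLeib : ∀ jx : ℕ, ∀ xx ∈ H jx, ∀ y : A,
      d (xx * y) = d xx * y + ((-1 : F) ^ (n + 1 - jx)) • (xx * d y))
    (D : ∀ i : ℕ, ↥(H i) →ₗ[F] ↥(H (i + 1)))
    (hDd : ∀ (i : ℕ) (v : ↥(H i)), ((D i v : A)) = d (v : A))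
    (hacyc : ∀ i, LinearMap.ker (D (i + 1)) = LinearMap.range (D i))
    (κ : ℕ → Type*) [∀ i, Fintype (κ i)]
    (bb : ∀ i, Module.Basis (κ i) F ↥(LinearMap.range (D i)))
    (s : ∀ i, ↥(LinearMap.range (D i)) →ₗ[F] ↥(H i))
    (hs : ∀ (i : ℕ) (v : ↥(LinearMap.range (D i))), D i (s i v) = v.1)
    (e : ∀ i : ℕ, {S : Finset (Fin n) // S.card + (i + 1) = n + 1} ≃ (κ i ⊕ κ (i + 1))) :
    (∀ i, ∃ rr : F, d (x i) = rr • (1 : A)) ∧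
    (∃ i, d (x i) ≠ 0) ∧
    (let τ := ∏ i ∈ Finset.range (n + 1),
        ((hb (i + 1)).toMatrix
          (fun q => Sum.elim (fun a => (bb i a).1) (fun a => s (i + 1) (bb (i + 1) a))
            (e i q))).det ^ ((-1 : ℤ) ^ i)
     τ = 1 ∨ τ = -1) := by
  classical
  -- basic monomial facts
  have hm1 : m ∅ = (1 : A) := by simp [hm]
  have hmx : ∀ i, m {i} = x i := by intro i; simp [hm]
  have hxH : ∀ i, x i ∈ H n := by
    intro i
    have h := hmdeg {i}
    rw [Finset.card_singleton, hmx i, show n + 1 - 1 = n by omega] at h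
    exact h
  have h1H : (1 : A) ∈ H (n + 1) := by
    have h := hmdeg ∅
    rwa [Finset.card_empty, Nat.sub_zero, hm1] at h
  have hd1 : d (1 : A) = 0 := by
    have h2 : H (n + 1 + 1) = ⊥ := hHtop _ (by omega)
    have h3 := hDd (n + 1) ⟨1, h1H⟩
    have h4 := (D (n + 1) ⟨1, h1H⟩).2
    have h5 := (Submodule.eq_bot_iff _).1 h2 _ h4
    rw [← h3, h5]
  -- every element of H (n+1) is a scalar multiple of 1
  haveI : Unique {S : Finset (Fin n) // S.card + (n + 1) = n + 1} := by
    refine ⟨⟨⟨∅, by simp⟩⟩, ?_⟩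
    rintro ⟨S, hS⟩
    have : S = ∅ := Finset.card_eq_zero.1 (by omega)
    subst this; rfl
  have exprTop : ∀ v : ↥(H (n + 1)), ∃ c : F, (v : A) = c • (1 : A) := by
    intro v
    have h := Module.Basis.sum_repr (hb (n + 1)) v
    rw [Finset.univ_unique, Finset.sum_singleton] at h
    refine ⟨(hb (n + 1)).repr v default, ?_⟩
    have := congrArg (Submodule.subtype (H (n + 1))) h
    simp only [map_smul, Submodule.subtype_apply] at this
    rw [← this, hhb (n + 1) default]
    have hde : ((default : {S : Finset (Fin n) // S.card + (n + 1) = n + 1}) : Finset (Fin n)) = ∅ := by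
      have : (default : {S : Finset (Fin n) // S.card + (n + 1) = n + 1}).1.card = 0 := by
        have := (default : {S : Finset (Fin n) // S.card + (n + 1) = n + 1}).2; omega
      exact Finset.card_eq_zero.1 this
    rw [hde, hm1]
  have hdx : ∀ i, ∃ rr : F, d (x i) = rr • (1 : A) := by
    intro i
    obtain ⟨c, hc⟩ := exprTop (D n ⟨x i, hxH i⟩)
    rw [hDd n ⟨x i, hxH i⟩] at hc
    exact ⟨c, hc⟩
  choose r hr using hdx
  -- Leibniz for generators
  have hLx : ∀ (a : Fin n) (y : A), d (x a * y) = r a • y - x a * d y := by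
    intro a y
    have h := hLeib n (x a) (hxH a) y
    rw [hr a, show n + 1 - n = 1 by omega] at h
    rw [h, pow_one, smul_mul_assoc, one_mul, neg_smul, one_smul]
    rw [sub_eq_add_neg, add_comm]
  have hxmul : ∀ (a : Fin n) (S : Finset (Fin n)), a ∉ S → (∀ b ∈ S, a ≤ b) →
      x a * m S = m (insert a S) := by
    intro a S h1 h2
    rw [hm, hm, Finset.sort_insert _ h2 h1, List.map_cons, List.prod_cons]
  have hmin : ∀ (T : Finset (Fin n)) (hT : T.Nonempty),
      m T = x (T.min' hT) * m (T.erase (T.min' hT)) := by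
    intro T hT
    have h1 : insert (T.min' hT) (T.erase (T.min' hT)) = T := Finset.insert_erase (T.min'_mem hT)
    rw [hxmul (T.min' hT) (T.erase (T.min' hT)) (Finset.notMem_erase _ _)
      (fun b hb' => T.min'_le b (Finset.mem_of_mem_erase hb')), h1]
  -- mapping spans through linear maps
  have hspanmap : ∀ (f : A →ₗ[F] A) (sgen t : Set A), (∀ w ∈ sgen, f w ∈ Submodule.span F t) →
      ∀ w ∈ Submodule.span F sgen, f w ∈ Submodule.span F t := by
    intro f sgen t h w hw
    have h1 : (Submodule.span F sgen).map f ≤ Submodule.span F t := by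
      rw [Submodule.map_span]
      refine Submodule.span_le.2 ?_
      rintro _ ⟨u, hu, rfl⟩
      exact h u hu
    exact h1 (Submodule.mem_map_of_mem hw)
  -- Q : d of a monomial lies in the span of codimension-one sub-monomials
  have hQ : ∀ T : Finset (Fin n), d (m T) ∈ Submodule.span F
      {z : A | ∃ S, S ⊆ T ∧ S.card + 1 = T.card ∧ z = m S} := by
    intro T
    induction T using Finset.strongInduction with
    | _ T ih =>
      rcases T.eq_empty_or_nonempty with rfl | hT
      · rw [hm1, hd1]; exact Submodule.zero_mem _
      · have hmem := T.min'_mem hT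
        have hTT : T.erase (T.min' hT) ⊂ T := Finset.erase_ssubset hmem
        have hc0 : 0 < T.card := Finset.card_pos.2 hT
        have hc1 := Finset.card_erase_of_mem hmem
        rw [hmin T hT, hLx]
        refine Submodule.sub_mem _ ?_ ?_
        · exact Submodule.smul_mem _ _ (Submodule.subset_span
            ⟨T.erase (T.min' hT), Finset.erase_subset _ _, by omega, rfl⟩)
        · refine hspanmap (LinearMap.mulLeft F (x (T.min' hT))) _ _ ?_ _ (ih _ hTT)
          rintro w ⟨S, hsub, hcard, rfl⟩
          have hanS : (T.min' hT) ∉ S := fun h => (Finset.notMem_erase (T.min' hT) T) (hsub h)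
          have hle : ∀ b ∈ S, (T.min' hT) ≤ b := fun b hbS =>
            T.min'_le b (Finset.mem_of_mem_erase (hsub hbS))
          simp only [LinearMap.mulLeft_apply]
          rw [hxmul _ S hanS hle]
          refine Submodule.subset_span ⟨insert (T.min' hT) S, ?_, ?_, rfl⟩
          · intro y hy
            rcases Finset.mem_insert.1 hy with rfl | hy
            · exact hmem
            · exact Finset.mem_of_mem_erase (hsub hy)
          · rw [Finset.card_insert_of_notMem hanS]; omega
  -- R : leading coefficient of d of a monomial containing jj
  have hR : ∀ (jj : Fin n) (T : Finset (Fin n)), jj ∈ T →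
      ∃ ε : F, (ε = r jj ∨ ε = - r jj) ∧
        d (m T) - ε • m (T.erase jj) ∈ Submodule.span F
          {z : A | ∃ S, jj ∈ S ∧ S ⊆ T ∧ S.card + 1 = T.card ∧ z = m S} := by
    intro jj T
    induction T using Finset.strongInduction with
    | _ T ih =>
      intro hjT
      have hT : T.Nonempty := ⟨jj, hjT⟩
      have hmm := T.min'_mem hT
      have hTT : T.erase (T.min' hT) ⊂ T := Finset.erase_ssubset hmm
      have hc0 : 0 < T.card := Finset.card_pos.2 hT
      have hc1 := Finset.card_erase_of_mem hmm
      by_cases haj : T.min' hT = jj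
      · refine ⟨r jj, Or.inl rfl, ?_⟩
        rw [hmin T hT, hLx, haj, sub_sub_cancel_left]
        refine Submodule.neg_mem _ ?_
        refine hspanmap (LinearMap.mulLeft F (x jj)) _ _ ?_ _ (hQ (T.erase jj))
        rintro w ⟨S, hsub, hcard, rfl⟩
        have hanS : jj ∉ S := fun h => (Finset.notMem_erase jj T) (hsub h)
        have hle : ∀ b ∈ S, jj ≤ b := fun b hbS => by
          rw [← haj]; exact T.min'_le b (Finset.mem_of_mem_erase (hsub hbS))
        simp only [LinearMap.mulLeft_apply]
        rw [hxmul _ S hanS hle]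
        refine Submodule.subset_span ⟨insert jj S, Finset.mem_insert_self _ _, ?_, ?_, rfl⟩
        · intro y hy
          rcases Finset.mem_insert.1 hy with rfl | hy
          · exact hjT
          · exact Finset.mem_of_mem_erase (hsub hy)
        · rw [Finset.card_insert_of_notMem hanS]
          have hc2 := Finset.card_erase_of_mem hjT
          omega
      · have hjT' : jj ∈ T.erase (T.min' hT) := Finset.mem_erase.2 ⟨fun h => haj h.symm, hjT⟩
        obtain ⟨ε', hε', hu'⟩ := ih _ hTT hjT'
        refine ⟨-ε', by rcases hε' with h | h <;> simp [h], ?_⟩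
        have e0 : ((T.erase (T.min' hT)).erase jj) = ((T.erase jj).erase (T.min' hT)) := by
          ext y; simp only [Finset.mem_erase]; tauto
        have hmjj : T.min' hT ∈ T.erase jj := Finset.mem_erase.2 ⟨haj, hmm⟩
        have e1 : x (T.min' hT) * m ((T.erase (T.min' hT)).erase jj) = m (T.erase jj) := by
          rw [e0, hxmul _ _ (Finset.notMem_erase _ _) (fun b hbS =>
            T.min'_le b (Finset.mem_of_mem_erase (Finset.mem_of_mem_erase hbS))),
            Finset.insert_erase hmjj]
        have h2 : x (T.min' hT) * (d (m (T.erase (T.min' hT))) -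
              ε' • m ((T.erase (T.min' hT)).erase jj)) =
            x (T.min' hT) * d (m (T.erase (T.min' hT))) - ε' • m (T.erase jj) := by
          rw [mul_sub, Algebra.mul_smul_comm, e1]
        have key : d (m T) - (-ε') • m (T.erase jj) =
            r (T.min' hT) • m (T.erase (T.min' hT)) - x (T.min' hT) *
              (d (m (T.erase (T.min' hT))) - ε' • m ((T.erase (T.min' hT)).erase jj)) := by
          rw [hmin T hT, hLx, h2]
          module
        rw [key]
        refine Submodule.sub_mem _ ?_ ?_
        · refine Submodule.smul_mem _ _ (Submodule.subset_span
            ⟨T.erase (T.min' hT), hjT', Finset.erase_subset _ _, by omega, rfl⟩)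
        · refine hspanmap (LinearMap.mulLeft F (x (T.min' hT))) _ _ ?_ _ hu'
          rintro w ⟨S, hjS, hsub, hcard, rfl⟩
          have hanS : (T.min' hT) ∉ S := fun h => (Finset.notMem_erase (T.min' hT) T) (hsub h)
          have hle : ∀ b ∈ S, (T.min' hT) ≤ b := fun b hbS =>
            T.min'_le b (Finset.mem_of_mem_erase (hsub hbS))
          simp only [LinearMap.mulLeft_apply]
          rw [hxmul _ S hanS hle]
          refine Submodule.subset_span ⟨insert (T.min' hT) S, Finset.mem_insert_of_mem hjS, ?_, ?_, rfl⟩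
          · intro y hy
            rcases Finset.mem_insert.1 hy with rfl | hy
            · exact hmm
            · exact Finset.mem_of_mem_erase (hsub hy)
          · rw [Finset.card_insert_of_notMem hanS]; omega
  -- some generator has nonzero differential
  have hdz : ∃ i, d (x i) ≠ 0 := by
    by_contra hcon
    push_neg at hcon
    have hz : ∀ T : Finset (Fin n), d (m T) = 0 := by
      intro T
      induction T using Finset.strongInduction with
      | _ T ih =>
        rcases T.eq_empty_or_nonempty with rfl | hT
        · rw [hm1, hd1]
        · rw [hmin T hT]
          have h := hLeib n (x (T.min' hT)) (hxH _) (m (T.erase (T.min' hT)))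
          rw [hcon, ih _ (Finset.erase_ssubset (T.min'_mem hT))] at h
          simpa using h
    have hk : LinearMap.ker (D 1) = ⊥ := by
      rw [hacyc 0]
      refine (Submodule.eq_bot_iff _).2 ?_
      rintro v ⟨w, rfl⟩
      have hw : w = 0 := Subtype.ext ((Submodule.eq_bot_iff _).1 hH0 _ w.2)
      rw [hw, map_zero]
    have hq : ((Finset.univ : Finset (Fin n)).card + 1 = n + 1) := by
      rw [Finset.card_univ, Fintype.card_fin]
    have hne := Module.Basis.ne_zero (hb 1) ⟨Finset.univ, hq⟩
    have hD1 : D 1 (hb 1 ⟨Finset.univ, hq⟩) = 0 := by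
      refine Subtype.ext ?_
      rw [hDd 1, hhb 1 ⟨Finset.univ, hq⟩]
      exact (hz Finset.univ).trans rfl
    rw [LinearMap.ker_eq_bot'] at hk
    exact hne (hk _ hD1)
  obtain ⟨j, hdj⟩ := hdz
  have hrj : r j ≠ 0 := fun h => hdj (by rw [hr j, h, zero_smul])
  -- membership of lifted monomials
  have memH : ∀ (i : ℕ) (S : Jty n j i), m (insert j S.1) ∈ H i := by
    intro i S
    have h := hmdeg (insert j S.1)
    have hc : (insert j S.1).card = S.1.card + 1 := Finset.card_insert_of_notMem S.2.1
    have h2 : n + 1 - (insert j S.1).card = i := by rw [hc]; have := S.2.2; omega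
    rwa [h2] at h
  let vS : ∀ i : ℕ, Jty n j i → ↥(H (i + 1)) :=
    fun i S' => D i ⟨m (insert j S'.1), memH i S'⟩
  have hvS : ∀ (i : ℕ) (S' : Jty n j i), ((vS i S' : A)) = d (m (insert j S'.1)) :=
    fun i S' => hDd i _
  -- coordinates of vS in the monomial basis, at j-free indices
  have hcoordE : ∀ (i : ℕ) (S' : Jty n j i), ∃ ε : F, (ε = r j ∨ ε = - r j) ∧
      ∀ (q : {S : Finset (Fin n) // S.card + (i + 1) = n + 1}), j ∉ q.1 →
        (hb (i + 1)).repr (vS i S') q = if q.1 = S'.1 then ε else 0 := by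
    intro i S'
    obtain ⟨ε, hε, hmem⟩ := hR j (insert j S'.1) (Finset.mem_insert_self _ _)
    refine ⟨ε, hε, ?_⟩
    rw [Finset.erase_insert S'.2.1] at hmem
    have hS'idx : S'.1.card + (i + 1) = n + 1 := by have := S'.2.2; omega
    have hcoe : ((vS i S' - ε • (hb (i + 1)) ⟨S'.1, hS'idx⟩ : ↥(H (i + 1))) : A)
        = d (m (insert j S'.1)) - ε • m S'.1 := by
      rw [AddSubgroupClass.coe_sub, SetLike.val_smul, hvS, hhb]
    have hgen : {z : A | ∃ S, j ∈ S ∧ S ⊆ insert j S'.1 ∧ S.card + 1 = (insert j S'.1).card ∧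
          z = m S} ⊆ (Submodule.subtype (H (i + 1))) ''
        ((hb (i + 1)) '' {q : {S : Finset (Fin n) // S.card + (i + 1) = n + 1} | j ∈ q.1}) := by
      rintro _ ⟨S, hjS, hsub, hcard, rfl⟩
      have hSc : S.card + (i + 1) = n + 1 := by
        have h1 : (insert j S'.1).card = S'.1.card + 1 := Finset.card_insert_of_notMem S'.2.1
        have := S'.2.2; omega
      exact ⟨(hb (i + 1)) ⟨S, hSc⟩, ⟨⟨S, hSc⟩, hjS, rfl⟩, hhb (i + 1) ⟨S, hSc⟩⟩
    have h1 := Submodule.span_mono hgen hmem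
    rw [← Submodule.map_span] at h1
    obtain ⟨u'', hu''span, hu''⟩ := h1
    have hu2 : u'' = vS i S' - ε • (hb (i + 1)) ⟨S'.1, hS'idx⟩ :=
      Subtype.ext (by rw [hcoe]; exact hu'')
    rw [hu2] at hu''span
    intro q hq
    have hker : Submodule.span F ((hb (i + 1)) ''
        {q : {S : Finset (Fin n) // S.card + (i + 1) = n + 1} | j ∈ q.1}) ≤
        LinearMap.ker ((hb (i + 1)).coord q) := by
      rw [Submodule.span_le]
      rintro _ ⟨p, hp, rfl⟩
      simp only [SetLike.mem_coe, LinearMap.mem_ker, Module.Basis.coord_apply, Module.Basis.repr_self]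
      rw [Finsupp.single_apply, if_neg]
      intro hpq
      exact hq (by rw [← hpq]; exact hp)
    have h0 := hker hu''span
    simp only [LinearMap.mem_ker, Module.Basis.coord_apply, map_sub, map_smul, Finsupp.sub_apply,
      Finsupp.smul_apply, Module.Basis.repr_self, smul_eq_mul] at h0
    rw [Finsupp.single_apply, sub_eq_zero] at h0
    by_cases hqS : q.1 = S'.1
    · have hss : (⟨S'.1, hS'idx⟩ : {S : Finset (Fin n) // S.card + (i + 1) = n + 1}) = q :=
        Subtype.ext hqS.symm
      rw [h0, if_pos hss, if_pos hqS, mul_one]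
    · have hss : (⟨S'.1, hS'idx⟩ : {S : Finset (Fin n) // S.card + (i + 1) = n + 1}) ≠ q :=
        fun h => hqS (by rw [← h])
      rw [h0, if_neg hss, if_neg hqS, mul_zero]
  choose ε hεpm hεrepr using hcoordE
  have hεne : ∀ (i : ℕ) (S' : Jty n j i), ε i S' ≠ 0 := by
    intro i S'
    rcases hεpm i S' with h | h <;> simp [h, hrj]
  -- linear independence of the vS
  have hindep : ∀ i : ℕ, LinearIndependent F (vS i) := by
    intro i
    let φ : ↥(H (i + 1)) →ₗ[F] (Jty n j i → F) :=
      { toFun := fun v S => (hb (i + 1)).repr v ⟨S.1, by have := S.2.2; omega⟩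
        map_add' := by intro a b; funext S; simp
        map_smul' := by intro c a; funext S; simp }
    have hcomp : φ ∘ vS i = (fun S => (Units.mk0 (ε i S) (hεne i S)) • Pi.basisFun F (Jty n j i) S) := by
      funext S' S
      have h1 := hεrepr i S' ⟨S.1, by have := S.2.2; omega⟩ S.2.1
      simp only [Function.comp_apply, φ, LinearMap.coe_mk, AddHom.coe_mk]
      rw [h1, Pi.basisFun_apply]
      simp only [Pi.smul_apply, Units.smul_def, Units.val_mk0, Pi.single_apply, smul_eq_mul]
      by_cases hSS : S = S'
      · subst hSS; rw [if_pos rfl, if_pos rfl, mul_one]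
      · rw [if_neg (fun h => hSS (Subtype.ext h)), if_neg hSS, mul_zero]
    have hind1 : LinearIndependent F (φ ∘ vS i) := by
      rw [hcomp]
      exact (Pi.basisFun F (Jty n j i)).linearIndependent.units_smul _
    exact LinearIndependent.of_comp φ hind1
  -- the vS span the boundary spaces
  have hspanB : ∀ i : ℕ, LinearMap.range (D i) ≤ Submodule.span F (Set.range (vS i)) := by
    intro i
    rw [LinearMap.range_eq_map, ← (hb i).span_eq, Submodule.map_span]
    refine Submodule.span_le.2 ?_
    rintro _ ⟨_, ⟨p, rfl⟩, rfl⟩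
    by_cases hjp : j ∈ p.1
    · have hp2 := p.2
      have hqc : ¬ j ∈ p.1.erase j ∧ (p.1.erase j).card + i = n := by
        refine ⟨Finset.notMem_erase _ _, ?_⟩
        have := Finset.card_erase_of_mem hjp
        have hpos : 0 < p.1.card := Finset.card_pos.2 ⟨j, hjp⟩
        omega
      have heq : D i ((hb i) p) = vS i ⟨p.1.erase j, hqc⟩ := by
        refine Subtype.ext ?_
        rw [hDd, hvS, hhb, Finset.insert_erase hjp]
      rw [heq]
      exact Submodule.subset_span ⟨_, rfl⟩
    · obtain ⟨εp, hεp, hmem⟩ := hR j (insert j p.1) (Finset.mem_insert_self _ _)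
      rw [Finset.erase_insert hjp] at hmem
      have hεpne : εp ≠ 0 := by rcases hεp with h | h <;> simp [h, hrj]
      have hdd : ∀ z : A, d (d z) = 0 := by
        intro z
        have h := LinearMap.congr_fun hd2 z
        simpa using h
      have h4 : d (d (m (insert j p.1)) - εp • m p.1) ∈
          Submodule.span F ((Submodule.subtype (H (i + 1))) '' Set.range (vS i)) := by
        refine hspanmap d _ _ ?_ _ hmem
        rintro _ ⟨S, hjS, hsub, hcard, rfl⟩
        have hSc : ¬ j ∈ S.erase j ∧ (S.erase j).card + i = n := by
          refine ⟨Finset.notMem_erase _ _, ?_⟩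
          have h5 := Finset.card_erase_of_mem hjS
          have h6 : (insert j p.1).card = p.1.card + 1 := Finset.card_insert_of_notMem hjp
          have hpos : 0 < S.card := Finset.card_pos.2 ⟨j, hjS⟩
          have := p.2
          omega
        have h7 : d (m S) = (Submodule.subtype (H (i + 1))) (vS i ⟨S.erase j, hSc⟩) := by
          rw [Submodule.subtype_apply, hvS, Finset.insert_erase hjS]
        rw [h7]
        exact Submodule.subset_span ⟨_, ⟨_, rfl⟩, rfl⟩
      have h3 : εp • d (m p.1) = - d (d (m (insert j p.1)) - εp • m p.1) := by
        rw [map_sub, map_smul, hdd, zero_sub, neg_neg]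
      have h5 : d (m p.1) = εp⁻¹ • (- d (d (m (insert j p.1)) - εp • m p.1)) := by
        rw [← h3, smul_smul, inv_mul_cancel₀ hεpne, one_smul]
      have h6 : d (m p.1) ∈ Submodule.span F ((Submodule.subtype (H (i + 1))) '' Set.range (vS i)) := by
        rw [h5]
        exact Submodule.smul_mem _ _ (Submodule.neg_mem _ h4)
      rw [← Submodule.map_span] at h6
      obtain ⟨y, hy, hyeq⟩ := h6
      have h8 : y = D i ((hb i) p) := by
        refine Subtype.ext ?_
        rw [Submodule.subtype_apply] at hyeq
        rw [hyeq, hDd, hhb]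
      rw [← h8]
      exact hy
  -- bases of the boundary spaces made of the vS
  have hBbE : ∀ i : ℕ, ∃ Bb : Module.Basis (Jty n j i) F ↥(LinearMap.range (D i)),
      ∀ S', ((Bb S' : ↥(H (i + 1)))) = vS i S' := by
    intro i
    have hind2 : LinearIndependent F (fun S' => (⟨vS i S', LinearMap.mem_range_self (D i) _⟩ :
        ↥(LinearMap.range (D i)))) := by
      apply LinearIndependent.of_comp (Submodule.subtype _)
      exact hindep i
    have hsp2 : ⊤ ≤ Submodule.span F (Set.range (fun S' =>
        (⟨vS i S', LinearMap.mem_range_self (D i) _⟩ : ↥(LinearMap.range (D i))))) := by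
      rintro w -
      obtain ⟨c, hc⟩ := (Submodule.mem_span_range_iff_exists_fun F).1 (hspanB i w.2)
      have hsum : (∑ S', c S' • (⟨vS i S', LinearMap.mem_range_self (D i) _⟩ :
          ↥(LinearMap.range (D i)))) = w := by
        refine Subtype.ext ?_
        rw [AddSubmonoidClass.coe_finset_sum]
        simp only [SetLike.val_smul]
        exact hc
      rw [← hsum]
      exact Submodule.sum_mem _ fun S' _ => Submodule.smul_mem _ _ (Submodule.subset_span ⟨S', rfl⟩)
    exact ⟨Module.Basis.mk hind2 hsp2, fun S' => by rw [Module.Basis.mk_apply]⟩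
  choose Bb hBb using hBbE
  -- transition matrices
  let g : ∀ i : ℕ, κ i ≃ Jty n j i := fun i => (bb i).indexEquiv (Bb i)
  let bbr : ∀ i : ℕ, Module.Basis (Jty n j i) F ↥(LinearMap.range (D i)) := fun i => (bb i).reindex (g i)
  let P : ∀ i : ℕ, Matrix (Jty n j i) (Jty n j i) F := fun i => (Bb i).toMatrix (bbr i)
  have hPdet : ∀ i, (P i).det ≠ 0 := by
    intro i
    have h := congrArg Matrix.det (Module.Basis.toMatrix_mul_toMatrix_flip (Bb i) (bbr i))
    rw [Matrix.det_mul, Matrix.det_one] at h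
    exact left_ne_zero_of_mul_eq_one h
  haveI hJ0 : IsEmpty (Jty n j 0) := Jty_isEmpty_zero n (by omega) j
  haveI hJtop : IsEmpty (Jty n j (n + 1)) := Jty_isEmpty_top n j
  have hP0 : (P 0).det = 1 := Matrix.det_isEmpty
  have hPtop : (P (n + 1)).det = 1 := Matrix.det_isEmpty
  -- the key determinant formula in each degree
  have hdetA : ∀ i : ℕ, ∃ c0 : F, c0 * c0 = 1 ∧
      ((hb (i + 1)).toMatrix (fun q => Sum.elim (fun a => (bb i a).1)
        (fun a => s (i + 1) (bb (i + 1) a)) (e i q))).det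
        = c0 * (∏ S' : Jty n j i, ε i S') * ((P i).det * (P (i + 1)).det) := by
    intro i
    set lift2 : Jty n j (i + 1) → ↥(H (i + 1)) :=
      fun T => ⟨m (insert j T.1), memH (i + 1) T⟩ with hlift2
    set G' : Jty n j i ⊕ Jty n j (i + 1) → ↥(H (i + 1)) := Sum.elim (vS i) lift2 with hG'
    set fam' : {S : Finset (Fin n) // S.card + (i + 1) = n + 1} → ↥(H (i + 1)) :=
      fun q => G' (esplit n j i q) with hfam'
    have hwmem : ∀ a : Jty n j (i + 1),
        (s (i + 1) (bbr (i + 1) a) - ∑ T, (P (i + 1)) T a • lift2 T) ∈ LinearMap.range (D i) := by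
      intro a
      rw [← hacyc i, LinearMap.mem_ker, map_sub, map_sum]
      have h1 : D (i + 1) (s (i + 1) (bbr (i + 1) a)) = (bbr (i + 1) a).1 := hs (i + 1) _
      have h2 : ∀ T : Jty n j (i + 1), D (i + 1) ((P (i + 1)) T a • lift2 T)
          = (P (i + 1)) T a • vS (i + 1) T := fun T => by rw [map_smul]
      have h3 := congrArg (Submodule.subtype (LinearMap.range (D (i + 1))))
        (Module.Basis.sum_repr (Bb (i + 1)) (bbr (i + 1) a))
      rw [map_sum] at h3
      simp only [map_smul, Submodule.subtype_apply] at h3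
      rw [h1, Finset.sum_congr rfl (fun T _ => h2 T), sub_eq_zero, ← h3]
      refine Finset.sum_congr rfl (fun T _ => ?_)
      rw [hBb (i + 1) T]
      rfl
    set Rm : Matrix (Jty n j i) (Jty n j (i + 1)) F :=
      Matrix.of (fun S a => (Bb i).repr ⟨_, hwmem a⟩ S) with hRm
    set FB : Matrix (Jty n j i ⊕ Jty n j (i + 1)) (Jty n j i ⊕ Jty n j (i + 1)) F :=
      Matrix.fromBlocks (P i) Rm 0 (P (i + 1)) with hFB
    set et : {S : Finset (Fin n) // S.card + (i + 1) = n + 1} ≃ (Jty n j i ⊕ Jty n j (i + 1)) :=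
      (e i).trans (Equiv.sumCongr (g i) (g (i + 1))) with het
    set C : Matrix {S : Finset (Fin n) // S.card + (i + 1) = n + 1}
        {S : Finset (Fin n) // S.card + (i + 1) = n + 1} F :=
      Matrix.of (fun q p => FB (esplit n j i q) (et p)) with hC
    have hbbg : ∀ (k : ℕ) (a : κ k), bbr k (g k a) = bb k a := by
      intro k a
      rw [Module.Basis.reindex_apply, Equiv.symm_apply_apply]
    have hexpB : ∀ (k : ℕ) (v : ↥(LinearMap.range (D k))),
        (v : ↥(H (k + 1))) = ∑ S', (Bb k).repr v S' • vS k S' := by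
      intro k v
      have h3 := congrArg (Submodule.subtype (LinearMap.range (D k))) (Module.Basis.sum_repr (Bb k) v)
      rw [map_sum] at h3
      simp only [map_smul, Submodule.subtype_apply] at h3
      rw [← h3]
      exact Finset.sum_congr rfl (fun S' _ => by rw [hBb k S'])
    have hw2 : ∀ a : Jty n j (i + 1), s (i + 1) (bbr (i + 1) a)
        = (∑ S', (Bb i).repr ⟨_, hwmem a⟩ S' • vS i S') + ∑ T, (P (i + 1)) T a • lift2 T := by
      intro a
      have h3 := hexpB i ⟨_, hwmem a⟩
      have h3' : s (i + 1) (bbr (i + 1) a) - ∑ T, (P (i + 1)) T a • lift2 T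
          = ∑ S', (Bb i).repr ⟨_, hwmem a⟩ S' • vS i S' := h3
      exact sub_eq_iff_eq_add.1 h3'
    have hfamexp : ∀ p, Sum.elim (fun a => (bb i a).1) (fun a => s (i + 1) (bb (i + 1) a)) (e i p)
        = ∑ q, C q p • fam' q := by
      intro p
      have hsum : (∑ q, C q p • fam' q) = ∑ k, FB k (et p) • G' k := by
        rw [← Equiv.sum_comp (esplit n j i).symm (fun q => C q p • fam' q)]
        refine Finset.sum_congr rfl (fun k _ => ?_)
        rw [hC, hfam']
        simp only [Matrix.of_apply, Equiv.apply_symm_apply]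
      rw [hsum, Fintype.sum_sum_type]
      rcases he : e i p with a | a
      · have hetp : et p = Sum.inl (g i a) := by rw [het]; simp [he]
        rw [hetp, hFB, hG']
        simp only [Matrix.fromBlocks_apply₁₁, Matrix.fromBlocks_apply₂₁, Matrix.zero_apply,
          zero_smul, Finset.sum_const_zero, add_zero, Sum.elim_inl, Sum.elim_inr]
        have h4 : (bb i a).1 = ((bbr i (g i a) : ↥(H (i + 1)))) := by rw [hbbg i a]
        rw [h4, hexpB i (bbr i (g i a))]
        rfl
      · have hetp : et p = Sum.inr (g (i + 1) a) := by rw [het]; simp [he]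
        rw [hetp, hFB, hG']
        simp only [Matrix.fromBlocks_apply₁₂, Matrix.fromBlocks_apply₂₂, Sum.elim_inl, Sum.elim_inr]
        have h4 : s (i + 1) (bb (i + 1) a) = s (i + 1) (bbr (i + 1) (g (i + 1) a)) := by
          rw [hbbg (i + 1) a]
        rw [h4, hw2 (g (i + 1) a)]
        rw [hRm]
        rfl
    set σp : Equiv.Perm {S : Finset (Fin n) // S.card + (i + 1) = n + 1} :=
      et.trans (esplit n j i).symm with hσp
    have hCdet : C.det = ((Equiv.Perm.sign σp : ℤ) : F) * ((P i).det * (P (i + 1)).det) := by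
      have hCeq : C = (FB.submatrix (esplit n j i) (esplit n j i)).submatrix id σp := by
        ext q p
        rw [hC]
        simp only [Matrix.of_apply, Matrix.submatrix_apply, id_eq, hσp, Equiv.trans_apply,
          Equiv.apply_symm_apply]
      rw [hCeq, Matrix.det_permute', Matrix.det_submatrix_equiv_self, hFB,
        Matrix.det_fromBlocks_zero₂₁]
    have hTidx : ∀ T : Jty n j (i + 1), (insert j T.1).card + (i + 1) = n + 1 := by
      intro T
      rw [Finset.card_insert_of_notMem T.2.1]
      have := T.2.2; omega
    have hlifteq : ∀ T : Jty n j (i + 1), lift2 T = (hb (i + 1)) ⟨insert j T.1, hTidx T⟩ := by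
      intro T
      refine Subtype.ext ?_
      rw [hlift2, hhb]
    have hdetfam' : ((hb (i + 1)).toMatrix fam').det = ∏ S' : Jty n j i, ε i S' := by
      have h0 : ((hb (i + 1)).toMatrix fam').det =
          (((hb (i + 1)).toMatrix fam').submatrix (esplit n j i).symm (esplit n j i).symm).det :=
        (Matrix.det_submatrix_equiv_self _ _).symm
      rw [h0]
      have h1 : ((hb (i + 1)).toMatrix fam').submatrix (esplit n j i).symm (esplit n j i).symm =
          Matrix.fromBlocks (Matrix.diagonal (ε i)) 0
            (Matrix.of fun T S' => (hb (i + 1)).repr (vS i S')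
              ((esplit n j i).symm (Sum.inr T))) 1 := by
        ext k l
        have hfameval : ∀ l', fam' ((esplit n j i).symm l') = G' l' := by
          intro l'
          simp only [hfam', Equiv.apply_symm_apply]
        rcases k with S | T <;> rcases l with S' | T'
        · rw [Matrix.submatrix_apply, Module.Basis.toMatrix_apply, hfameval, hG', Sum.elim_inl]
          have hrowval : ((esplit n j i).symm (Sum.inl S)) =
              (⟨S.1, by have := S.2.2; omega⟩ : {S : Finset (Fin n) // S.card + (i + 1) = n + 1}) := rfl
          rw [hrowval, hεrepr i S' _ S.2.1, Matrix.fromBlocks_apply₁₁, Matrix.diagonal_apply]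
          by_cases hss : S = S'
          · subst hss; rw [if_pos rfl, if_pos rfl]
          · rw [if_neg (fun h => hss (Subtype.ext h)), if_neg hss]
        · rw [Matrix.submatrix_apply, Module.Basis.toMatrix_apply, hfameval, hG', Sum.elim_inr,
            hlifteq, Module.Basis.repr_self, Matrix.fromBlocks_apply₁₂, Matrix.zero_apply]
          rw [Finsupp.single_apply, if_neg]
          intro hcon
          have h5 : j ∈ ((esplit n j i).symm (Sum.inl S)).1 := by
            rw [← hcon]
            exact Finset.mem_insert_self _ _
          exact S.2.1 h5
        · rw [Matrix.submatrix_apply, Module.Basis.toMatrix_apply, hfameval, hG', Sum.elim_inl,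
            Matrix.fromBlocks_apply₂₁, Matrix.of_apply]
        · rw [Matrix.submatrix_apply, Module.Basis.toMatrix_apply, hfameval, hG', Sum.elim_inr,
            hlifteq, Module.Basis.repr_self, Matrix.fromBlocks_apply₂₂, Matrix.one_apply]
          have hrowval : ((esplit n j i).symm (Sum.inr T)) =
              (⟨insert j T.1, hTidx T⟩ : {S : Finset (Fin n) // S.card + (i + 1) = n + 1}) := rfl
          rw [hrowval, Finsupp.single_apply]
          by_cases htt : T = T'
          · subst htt; rw [if_pos rfl, if_pos rfl]
          · rw [if_neg, if_neg htt]
            intro hcon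
            apply htt
            have h5 : insert j T'.1 = insert j T.1 := congrArg Subtype.val hcon
            have h6 : T'.1 = T.1 := by
              have := congrArg (fun Z => Finset.erase Z j) h5
              simpa [Finset.erase_insert T'.2.1, Finset.erase_insert T.2.1] using this
            exact (Subtype.ext h6).symm
      rw [h1, Matrix.det_fromBlocks_zero₁₂, Matrix.det_diagonal, Matrix.det_one, mul_one]
    have hexp := aux_toMatrix_comb (hb (i + 1)) _ fam' C hfamexp
    refine ⟨((Equiv.Perm.sign σp : ℤ) : F), ?_, ?_⟩
    · rcases Int.units_eq_one_or (Equiv.Perm.sign σp) with h | h <;> rw [h] <;> norm_num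
    · rw [hexp, Matrix.det_mul, hdetfam', hCdet]
      ring
  choose c0 hc0sq hc0eq using hdetA
  have hc0ne : ∀ i, c0 i ≠ 0 := by
    intro i hzero
    have := hc0sq i
    rw [hzero, mul_zero] at this
    exact zero_ne_one this
  have hprodε : ∀ i : ℕ, (∏ S' : Jty n j i, ε i S') ≠ 0 :=
    fun i => Finset.prod_ne_zero_iff.2 fun S' _ => hεne i S'
  have hrjj : r j * r j ≠ 0 := mul_ne_zero hrj hrj
  refine ⟨fun i => ⟨r i, hr i⟩, ⟨j, hdj⟩, ?_⟩
  set Ad : ℕ → F := fun i => ((hb (i + 1)).toMatrix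
      (fun q => Sum.elim (fun a => (bb i a).1) (fun a => s (i + 1) (bb (i + 1) a))
        (e i q))).det with hAd
  show (∏ i ∈ Finset.range (n + 1), Ad i ^ ((-1 : ℤ) ^ i)) = 1 ∨
    (∏ i ∈ Finset.range (n + 1), Ad i ^ ((-1 : ℤ) ^ i)) = -1
  have hAsq : ∀ i : ℕ, Ad i * Ad i
      = ((r j * r j) ^ (Fintype.card (Jty n j i))) *
        (((P i).det * (P i).det) * ((P (i + 1)).det * (P (i + 1)).det)) := by
    intro i
    rw [hAd]
    simp only []
    rw [hc0eq i]
    have hE : (∏ S' : Jty n j i, ε i S') * (∏ S' : Jty n j i, ε i S')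
        = (r j * r j) ^ (Fintype.card (Jty n j i)) := by
      rw [← Finset.prod_mul_distrib,
        Finset.prod_congr rfl (fun S' _ => show ε i S' * ε i S' = r j * r j from by
          rcases hεpm i S' with h | h <;> rw [h] <;> ring),
        Finset.prod_const, Finset.card_univ]
    calc (c0 i * (∏ S' : Jty n j i, ε i S') * ((P i).det * (P (i + 1)).det)) *
          (c0 i * (∏ S' : Jty n j i, ε i S') * ((P i).det * (P (i + 1)).det))
        = (c0 i * c0 i) * ((∏ S' : Jty n j i, ε i S') * (∏ S' : Jty n j i, ε i S')) *
          (((P i).det * (P i).det) * ((P (i + 1)).det * (P (i + 1)).det)) := by ring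
      _ = _ := by rw [hc0sq i, hE, one_mul]
  have hkey : (∏ i ∈ Finset.range (n + 1), Ad i ^ ((-1 : ℤ) ^ i)) *
      (∏ i ∈ Finset.range (n + 1), Ad i ^ ((-1 : ℤ) ^ i)) = 1 := by
    rw [← Finset.prod_mul_distrib]
    have hfac : ∀ i ∈ Finset.range (n + 1),
        Ad i ^ ((-1 : ℤ) ^ i) * Ad i ^ ((-1 : ℤ) ^ i)
          = ((r j * r j) ^ ((Fintype.card (Jty n j i) : ℤ))) ^ ((-1 : ℤ) ^ i) *
            ((((P i).det * (P i).det) * ((P (i + 1)).det * (P (i + 1)).det)) ^ ((-1 : ℤ) ^ i)) := by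
      intro i _
      rw [← mul_zpow, hAsq i, mul_zpow, zpow_natCast]
    rw [Finset.prod_congr rfl hfac, Finset.prod_mul_distrib]
    have h1 : (∏ i ∈ Finset.range (n + 1),
        ((r j * r j) ^ ((Fintype.card (Jty n j i) : ℤ))) ^ ((-1 : ℤ) ^ i)) = 1 := by
      rw [aux_zpow_prod (r j * r j) hrjj (fun i => (Fintype.card (Jty n j i) : ℤ)) (n + 1)]
      have h2 : ∑ i ∈ Finset.range (n + 1), (-1 : ℤ) ^ i * (Fintype.card (Jty n j i) : ℤ)
          = ∑ i ∈ Finset.range (n + 1), (-1 : ℤ) ^ i * ((n - 1).choose (n - i) : ℤ) := by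
        refine Finset.sum_congr rfl (fun i hi => ?_)
        rw [Finset.mem_range] at hi
        rw [Jty_card n j i (by omega)]
      rw [h2, aux_alt_sum n hn, zpow_zero]
    have h3 : (∏ i ∈ Finset.range (n + 1),
        (((P i).det * (P i).det) * ((P (i + 1)).det * (P (i + 1)).det)) ^ ((-1 : ℤ) ^ i)) = 1 := by
      rw [aux_telescope (fun k => (P k).det * (P k).det)
        (fun k => mul_ne_zero (hPdet k) (hPdet k)) n]
      rw [hP0, hPtop]
      norm_num
    rw [h1, h3, mul_one]
  exact mul_self_eq_one_iff.1 hkey
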